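/- Let D be a finite directed graph in which every vertex has in-degree at most 1 or out-degree at most 1 (a unit network) with unit edge capacities, distinguished source s and sink t, and suppose every s-t path has length at least d where d > 4. Then the value of the maximum s-t flow is at most 2n/(d-2), where n is the number of vertices other than s and t. -/

import Mathlib

open Finset

/-- `IsPath A s t l` means the list `l` of vertices forms a directed path from
`s` to `t` along the edge relation `A`. -/
def IsDipath {X : Type*} (A : X → X → Prop) (s t : X) (l : List X) : Prop :=
  l.Chain' A ∧ l.head? = some s ∧ l.getLast? = some t

open Classical in
/-- Vertices reachable from `s` by a dipath with at most `i` edges. -/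
noncomputable def Rset {X : Type*} [Fintype X] (A : X → X → Prop) (s : X) (i : ℕ) : Finset X :=
  Finset.univ.filter (fun v => ∃ l : List X, IsDipath A s v l ∧ l.length ≤ i + 1)

lemma mem_Rset {X : Type*} [Fintype X] {A : X → X → Prop} {s v : X} {i : ℕ} :
    v ∈ Rset A s i ↔ ∃ l : List X, IsDipath A s v l ∧ l.length ≤ i + 1 := by
  simp [Rset]

lemma s_mem_Rset {X : Type*} [Fintype X] (A : X → X → Prop) (s : X) (i : ℕ) :
    s ∈ Rset A s i := by
  refine mem_Rset.2 ⟨[s], ⟨List.isChain_singleton s, rfl, rfl⟩, by simp⟩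

lemma Rset_mono {X : Type*} [Fintype X] (A : X → X → Prop) (s : X) {i j : ℕ} (h : i ≤ j) :
    Rset A s i ⊆ Rset A s j := by
  intro v hv
  obtain ⟨l, hl, hlen⟩ := mem_Rset.1 hv
  exact mem_Rset.2 ⟨l, hl, le_trans hlen (by omega)⟩

lemma Rset_step {X : Type*} [Fintype X] {A : X → X → Prop} {s u v : X} {i : ℕ}
    (hu : u ∈ Rset A s i) (hA : A u v) : v ∈ Rset A s (i + 1) := by
  obtain ⟨l, ⟨hc, hh, hlast⟩, hlen⟩ := mem_Rset.1 hu
  have hne : l ≠ [] := by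
    intro h; rw [h] at hh; simp at hh
  refine mem_Rset.2 ⟨l ++ [v], ⟨?_, ?_, ?_⟩, by simp; omega⟩
  · show List.IsChain A (l ++ [v]); rw [List.isChain_append]
    refine ⟨hc, List.isChain_singleton v, ?_⟩
    intro x hx y hy
    rw [hlast] at hx
    simp at hx hy
    rw [← hx, ← hy]; exact hA
  · rcases l with _ | ⟨a, l'⟩
    · exact absurd rfl hne
    · simpa using hh
  · simp

theorem unit_network_flow_bound {X : Type*} [Fintype X] [DecidableEq X]
    (A : X → X → Prop) (s t : X) (hst : s ≠ t)
    (hunit : ∀ v : X, v ≠ s → v ≠ t →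
      {u : X | A u v}.ncard ≤ 1 ∨ {u : X | A v u}.ncard ≤ 1)
    (d : ℕ) (hd : 4 < d)
    (hdist : ∀ l : List X, IsDipath A s t l → d ≤ l.length - 1)
    (f : X → X → ℕ)
    (hcap : ∀ x y : X, f x y ≤ 1)
    (hsupp : ∀ x y : X, ¬ A x y → f x y = 0)
    (hcons : ∀ v : X, v ≠ s → v ≠ t → ∑ u : X, f u v = ∑ u : X, f v u) :
    ((∑ u : X, f s u : ℤ) - ∑ u : X, f u s) * ((d : ℤ) - 2)
      ≤ 2 * ((Fintype.card X : ℤ) - 2) := by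
  classical
  set Fval : ℤ := ((∑ u : X, f s u : ℤ) - ∑ u : X, f u s) with hFval
  -- t is not reachable within fewer than d edges
  have ht_not : ∀ i : ℕ, i < d → t ∉ Rset A s i := by
    intro i hi ht
    obtain ⟨l, hl, hlen⟩ := mem_Rset.1 ht
    have := hdist l hl
    omega
  -- sum over a set of ncard ≤ 1
  have key : ∀ (g : X → ℕ) (Q : X → Prop), {u | Q u}.ncard ≤ 1 → (∀ u, ¬ Q u → g u = 0) →
      (∀ u, g u ≤ 1) → ∑ u : X, g u ≤ 1 := by
    intro g Q hQ h0 h1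
    have hset : {u | Q u} = ↑(univ.filter Q) := by ext u; simp
    rw [hset, Set.ncard_coe_finset] at hQ
    calc ∑ u : X, g u = ∑ u ∈ univ.filter Q, g u := by
          refine (Finset.sum_filter_of_ne ?_).symm
          intro u _ hg
          by_contra hq
          exact hg (h0 u hq)
      _ ≤ ∑ _u ∈ univ.filter Q, 1 := Finset.sum_le_sum (fun u _ => h1 u)
      _ = (univ.filter Q).card := by simp
      _ ≤ 1 := hQ
  -- flow out of an internal vertex is ≤ 1
  have hout : ∀ v : X, v ≠ s → v ≠ t → ∑ u : X, f v u ≤ 1 := by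
    intro v hvs hvt
    rcases hunit v hvs hvt with h | h
    · rw [← hcons v hvs hvt]
      exact key (fun u => f u v) (fun u => A u v) h (fun u hu => hsupp u v hu) (fun u => hcap u v)
    · exact key (fun u => f v u) (fun u => A v u) h (fun u hu => hsupp v u hu) (fun u => hcap v u)
  -- cut bound
  have cut : ∀ S : Finset X, s ∈ S → t ∉ S →
      Fval ≤ ∑ u ∈ S, ∑ v ∈ Sᶜ, (f u v : ℤ) := by
    intro S hsS htS
    have h1 : ∑ v ∈ S, ((∑ u : X, (f v u : ℤ)) - ∑ u : X, (f u v : ℤ)) = Fval := by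
      rw [Finset.sum_eq_single_of_mem s hsS]
      · rw [hFval]; push_cast; ring
      · intro v hvS hvs
        have hvt : v ≠ t := fun h => htS (h ▸ hvS)
        rw [sub_eq_zero]
        exact_mod_cast (hcons v hvs hvt).symm
    have e1 : ∑ v ∈ S, ∑ u : X, (f v u : ℤ)
        = ∑ v ∈ S, ∑ u ∈ S, (f v u : ℤ) + ∑ v ∈ S, ∑ u ∈ Sᶜ, (f v u : ℤ) := by
      rw [← Finset.sum_add_distrib]
      exact Finset.sum_congr rfl (fun v _ => (Finset.sum_add_sum_compl S _).symm)
    have e2 : ∑ v ∈ S, ∑ u : X, (f u v : ℤ)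
        = ∑ v ∈ S, ∑ u ∈ S, (f u v : ℤ) + ∑ v ∈ S, ∑ u ∈ Sᶜ, (f u v : ℤ) := by
      rw [← Finset.sum_add_distrib]
      exact Finset.sum_congr rfl (fun v _ => (Finset.sum_add_sum_compl S _).symm)
    have e3 : ∑ v ∈ S, ∑ u ∈ S, (f v u : ℤ) = ∑ v ∈ S, ∑ u ∈ S, (f u v : ℤ) :=
      Finset.sum_comm
    rw [Finset.sum_sub_distrib, e1, e2, e3] at h1
    have hnn : (0 : ℤ) ≤ ∑ v ∈ S, ∑ u ∈ Sᶜ, (f u v : ℤ) :=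
      Finset.sum_nonneg (fun v _ => Finset.sum_nonneg (fun u _ => by positivity))
    have : Fval = ∑ v ∈ S, ∑ u ∈ Sᶜ, (f v u : ℤ) - ∑ v ∈ S, ∑ u ∈ Sᶜ, (f u v : ℤ) := by
      linarith
    linarith
  -- per-level bound
  have step : ∀ j : ℕ, j + 1 < d →
      Fval ≤ ((Rset A s (j+1) \ Rset A s j).card : ℤ) := by
    intro j hj
    have hcut := cut (Rset A s (j+1)) (s_mem_Rset A s (j+1)) (ht_not (j+1) hj)
    calc Fval ≤ ∑ u ∈ Rset A s (j+1), ∑ v ∈ (Rset A s (j+1))ᶜ, (f u v : ℤ) := hcut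
      _ = ∑ u ∈ Rset A s (j+1) \ Rset A s j, ∑ v ∈ (Rset A s (j+1))ᶜ, (f u v : ℤ) := by
          refine (Finset.sum_subset Finset.sdiff_subset ?_).symm
          intro u huS hu
          have huj : u ∈ Rset A s j := by
            rw [Finset.mem_sdiff] at hu
            push_neg at hu
            exact hu huS
          refine Finset.sum_eq_zero (fun v hv => ?_)
          rw [Finset.mem_compl] at hv
          have hnA : ¬ A u v := fun hA => hv (Rset_step huj hA)
          exact_mod_cast hsupp u v hnA
      _ ≤ ∑ _u ∈ Rset A s (j+1) \ Rset A s j, (1 : ℤ) := by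
          refine Finset.sum_le_sum (fun u hu => ?_)
          rw [Finset.mem_sdiff] at hu
          have hus : u ≠ s := fun h => hu.2 (h ▸ s_mem_Rset A s j)
          have hut : u ≠ t := fun h => ht_not (j+1) hj (h ▸ hu.1)
          have h1 : ∑ v ∈ (Rset A s (j+1))ᶜ, f u v ≤ ∑ v : X, f u v :=
            Finset.sum_le_sum_of_subset (Finset.subset_univ _)
          have h2 := hout u hus hut
          have : ∑ v ∈ (Rset A s (j+1))ᶜ, (f u v : ℤ)
              = ((∑ v ∈ (Rset A s (j+1))ᶜ, f u v : ℕ) : ℤ) := by push_cast; rfl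
          rw [this]
          exact_mod_cast le_trans h1 h2
      _ = ((Rset A s (j+1) \ Rset A s j).card : ℤ) := by simp
  -- the level sets are disjoint
  set L : ℕ → Finset X := fun j => Rset A s (j+1) \ Rset A s j with hL
  have hdisj0 : ∀ j k : ℕ, j < k → Disjoint (L j) (L k) := by
    intro j k h
    refine Finset.disjoint_left.2 (fun v hvj hvk => ?_)
    rw [hL] at hvj hvk
    simp only [Finset.mem_sdiff] at hvj hvk
    exact hvk.2 (Rset_mono A s (by omega : j + 1 ≤ k) hvj.1)
  have hdisj : ∀ j ∈ Finset.range (d-1), ∀ k ∈ Finset.range (d-1), j ≠ k →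
      Disjoint (L j) (L k) := by
    intro j _ k _ hjk
    rcases Nat.lt_or_ge j k with h | h
    · exact hdisj0 j k h
    · exact (hdisj0 k j (by omega)).symm
  have hcard2 : 2 ≤ Fintype.card X := Fintype.one_lt_card_iff_nontrivial.2 ⟨⟨s, t, hst⟩⟩
  have hsumcard : ∑ j ∈ Finset.range (d-1), (L j).card ≤ Fintype.card X - 2 := by
    rw [← Finset.card_biUnion hdisj]
    have hsub : (Finset.range (d-1)).biUnion L ⊆ univ \ {s, t} := by
      intro v hv
      rw [Finset.mem_biUnion] at hv
      obtain ⟨j, hj, hvL⟩ := hv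
      rw [Finset.mem_range] at hj
      rw [hL] at hvL
      simp only [Finset.mem_sdiff] at hvL
      rw [Finset.mem_sdiff]
      refine ⟨Finset.mem_univ v, ?_⟩
      simp only [Finset.mem_insert, Finset.mem_singleton]
      push_neg
      constructor
      · exact fun h => hvL.2 (h ▸ s_mem_Rset A s j)
      · exact fun h => ht_not (j+1) (by omega) (h ▸ hvL.1)
    calc ((Finset.range (d-1)).biUnion L).card ≤ (univ \ ({s, t} : Finset X)).card :=
          Finset.card_le_card hsub
      _ = Fintype.card X - 2 := by
          rw [Finset.card_sdiff_of_subset (Finset.subset_univ _), Finset.card_univ,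
            Finset.card_pair hst]
  -- assemble
  have main : ((d : ℤ) - 1) * Fval ≤ (Fintype.card X : ℤ) - 2 := by
    have h1 : ∑ _j ∈ Finset.range (d-1), Fval ≤ ∑ j ∈ Finset.range (d-1), ((L j).card : ℤ) :=
      Finset.sum_le_sum (fun j hj => by
        rw [Finset.mem_range] at hj
        exact step j (by omega))
    rw [Finset.sum_const, Finset.card_range] at h1
    have h2 : (∑ j ∈ Finset.range (d-1), ((L j).card : ℤ)) ≤ (Fintype.card X : ℤ) - 2 := by
      have := hsumcard
      push_cast [← Nat.cast_sum]
      omega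
    have h3 : ((d - 1 : ℕ) : ℤ) = (d : ℤ) - 1 := by
      have : 1 ≤ d := by omega
      push_cast [Nat.cast_sub this]; ring
    calc ((d : ℤ) - 1) * Fval = (d - 1 : ℕ) • Fval := by rw [nsmul_eq_mul, h3]
      _ ≤ ∑ j ∈ Finset.range (d-1), ((L j).card : ℤ) := h1
      _ ≤ (Fintype.card X : ℤ) - 2 := h2
  have hd5 : (5 : ℤ) ≤ (d : ℤ) := by exact_mod_cast hd
  have hN : (0 : ℤ) ≤ (Fintype.card X : ℤ) - 2 := by
    have : (2 : ℤ) ≤ (Fintype.card X : ℤ) := by exact_mod_cast hcard2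
    linarith
  rcases le_or_gt Fval 0 with hF | hF
  · have : Fval * ((d : ℤ) - 2) ≤ 0 :=
      mul_nonpos_of_nonpos_of_nonneg hF (by linarith)
    linarith
  · have h1 : Fval * ((d : ℤ) - 2) ≤ Fval * ((d : ℤ) - 1) :=
      mul_le_mul_of_nonneg_left (by linarith) (le_of_lt hF)
    have h2 : Fval * ((d : ℤ) - 1) = ((d : ℤ) - 1) * Fval := mul_comm _ _
    linarith
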